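/- arXiv:0911.1025 — 6 statements merged into one kernel-verified Lean document; each statement's English description precedes it below -/
import Mathlib

section
/- The generating function of the spread polynomials satisfies ∑_{n≥0} Sₙ(s) tⁿ = t·s·(1+t) / ((1-t)(1-2t+t²+4ts)) as an identity of formal power series. -/
open Polynomial PowerSeries

noncomputable def spreadPoly : ℕ → Polynomial ℚ
  | 0 => 0
  | 1 => Polynomial.X
  | (n + 2) => 2 * (1 - 2 * Polynomial.X) * spreadPoly (n + 1) - spreadPoly n
      + 2 * Polynomial.X

lemma spreadPoly_rec (n : ℕ) :
    spreadPoly (n + 3) =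
      (3 - 4 * Polynomial.X) * spreadPoly (n + 2)
        - (3 - 4 * Polynomial.X) * spreadPoly (n + 1) + spreadPoly n := by
  have h2 : spreadPoly (n + 2) = 2 * (1 - 2 * Polynomial.X) * spreadPoly (n + 1)
      - spreadPoly n + 2 * Polynomial.X := rfl
  have h3 : spreadPoly (n + 3) = 2 * (1 - 2 * Polynomial.X) * spreadPoly (n + 2)
      - spreadPoly (n + 1) + 2 * Polynomial.X := rfl
  rw [h3, h2]
  ring

/-- Generating function of the spread polynomials, as formal power series in `t`
over `ℚ[s]`:  `(1-t)(1-2t+t²+4ts) · ∑ Sₙ(s) tⁿ = t·s·(1+t)`. -/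
theorem spreadPoly_generatingFunction :
    (1 - PowerSeries.X) *
      (1 - 2 * PowerSeries.X + PowerSeries.X ^ 2 +
        4 * PowerSeries.X * PowerSeries.C (R := Polynomial ℚ) Polynomial.X) *
      PowerSeries.mk (fun n => spreadPoly n) =
    PowerSeries.X * PowerSeries.C (R := Polynomial ℚ) Polynomial.X *
      (1 + PowerSeries.X) := by
  set s := PowerSeries.C (R := Polynomial ℚ) Polynomial.X with hs
  set F := PowerSeries.mk (fun n => spreadPoly n) with hF
  have hp1 : PowerSeries.C (R := Polynomial ℚ) (4 * Polynomial.X - 3) = 4 * s - 3 := by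
    simp [map_sub, map_mul, map_ofNat, hs]
  have hp2 : PowerSeries.C (R := Polynomial ℚ) (3 - 4 * Polynomial.X) = 3 - 4 * s := by
    simp [map_sub, map_mul, map_ofNat, hs]
  have hfac : (1 - PowerSeries.X) *
      (1 - 2 * PowerSeries.X + PowerSeries.X ^ 2 + 4 * PowerSeries.X * s) * F
      = F + PowerSeries.C (R := Polynomial ℚ) (4 * Polynomial.X - 3) * (PowerSeries.X * F)
          + PowerSeries.C (R := Polynomial ℚ) (3 - 4 * Polynomial.X) * (PowerSeries.X ^ 2 * F)
          - PowerSeries.X ^ 3 * F := by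
    rw [hp1, hp2]; ring
  have hrhs : PowerSeries.X * s * (1 + PowerSeries.X)
      = s * PowerSeries.X + s * PowerSeries.X ^ 2 := by ring
  rw [hfac, hrhs, hs]
  refine PowerSeries.ext fun n => ?_
  rw [map_sub, map_add, map_add, map_add, PowerSeries.coeff_C_mul,
    PowerSeries.coeff_C_mul, PowerSeries.coeff_C_mul, PowerSeries.coeff_C_mul]
  match n with
  | 0 =>
    simp [hF, spreadPoly]
  | 1 =>
    have e1 : (PowerSeries.coeff (R := Polynomial ℚ) 1) (PowerSeries.X * F)
        = spreadPoly 0 := by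
      rw [show (1 : ℕ) = 0 + 1 from rfl, PowerSeries.coeff_succ_X_mul]; simp [hF]
    rw [e1]
    simp [hF, spreadPoly, PowerSeries.coeff_X_pow, PowerSeries.coeff_X,
      PowerSeries.coeff_X_pow_mul']
  | 2 =>
    have e1 : (PowerSeries.coeff (R := Polynomial ℚ) 2) (PowerSeries.X * F)
        = spreadPoly 1 := by
      rw [show (2 : ℕ) = 1 + 1 from rfl, PowerSeries.coeff_succ_X_mul]; simp [hF]
    have e2 : (PowerSeries.coeff (R := Polynomial ℚ) 2) (PowerSeries.X ^ 2 * F)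
        = spreadPoly 0 := by
      rw [show (2 : ℕ) = 0 + 2 from rfl, PowerSeries.coeff_X_pow_mul]; simp [hF]
    rw [e1, e2]
    have hS2 : spreadPoly 2 = 2 * (1 - 2 * Polynomial.X) * spreadPoly 1
        - spreadPoly 0 + 2 * Polynomial.X := rfl
    simp [hF, PowerSeries.coeff_X_pow, PowerSeries.coeff_X, hS2, spreadPoly,
      PowerSeries.coeff_X_pow_mul']
    ring
  | (m + 3) =>
    have e1 : (PowerSeries.coeff (R := Polynomial ℚ) (m + 3)) (PowerSeries.X * F)
        = spreadPoly (m + 2) := by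
      rw [show m + 3 = (m + 2) + 1 by ring, PowerSeries.coeff_succ_X_mul]; simp [hF]
    have e2 : (PowerSeries.coeff (R := Polynomial ℚ) (m + 3)) (PowerSeries.X ^ 2 * F)
        = spreadPoly (m + 1) := by
      rw [show m + 3 = (m + 1) + 2 by ring, PowerSeries.coeff_X_pow_mul]; simp [hF]
    have e3 : (PowerSeries.coeff (R := Polynomial ℚ) (m + 3)) (PowerSeries.X ^ 3 * F)
        = spreadPoly m := by
      rw [PowerSeries.coeff_X_pow_mul]; simp [hF]
    rw [e1, e2, e3]
    have h1 : (m + 3 : ℕ) ≠ 1 := by omega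
    have h2 : (m + 3 : ℕ) ≠ 2 := by omega
    simp [hF, PowerSeries.coeff_X_pow, PowerSeries.coeff_X, h1, h2]
    linear_combination spreadPoly_rec m
end

section
/- For every natural number n, S₆ₙ(1/4) = 0; more precisely the sequence Sₙ(1/4) for n = 0,…,6 is 0, 1/4, 3/4, 1, 3/4, 1/4, 0 and is periodic with period 6. -/
def spread : ℕ → ℚ → ℚ
  | 0, _ => 0
  | 1, s => s
  | (n + 2), s => 2 * (1 - 2 * s) * spread (n + 1) s - spread n s + 2 * s

lemma spread_rec (n : ℕ) : spread (n + 2) (1/4) = spread (n + 1) (1/4) - spread n (1/4) + 1/2 := by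
  rw [spread]; ring

lemma spread_per : ∀ n : ℕ, spread (n + 6) (1/4) = spread n (1/4) ∧
    spread (n + 7) (1/4) = spread (n + 1) (1/4) := by
  intro n
  induction n with
  | zero => constructor <;> norm_num [spread_rec, spread]
  | succ k ih =>
    refine ⟨ih.2, ?_⟩
    have h1 : k + 1 + 7 = (k + 6) + 2 := by ring
    have h2 : k + 1 + 1 = k + 2 := by ring
    rw [h1, h2, spread_rec, spread_rec k, ih.1, ih.2]

theorem spread_quarter_periodic :
    (∀ n : ℕ, spread (6 * n) (1/4) = 0) ∧
    spread 0 (1/4) = 0 ∧ spread 1 (1/4) = 1/4 ∧ spread 2 (1/4) = 3/4 ∧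
    spread 3 (1/4) = 1 ∧ spread 4 (1/4) = 3/4 ∧ spread 5 (1/4) = 1/4 ∧
    spread 6 (1/4) = 0 ∧
    (∀ n : ℕ, spread (n + 6) (1/4) = spread n (1/4)) := by
  refine ⟨?_, ?_, ?_, ?_, ?_, ?_, ?_, ?_, fun n => (spread_per n).1⟩
  · intro n
    induction n with
    | zero => simp [spread]
    | succ k ih =>
      have : 6 * (k + 1) = 6 * k + 6 := by ring
      rw [this, (spread_per (6 * k)).1, ih]
  all_goals norm_num [spread_rec, spread]
end

section
/- For every natural number n ≥ 1, the rational number 3ⁿ · Sₙ(1/3) is an integer not divisible by 3; moreover for even n it is divisible by 2 and for odd n it is odd. -/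
def aSeq : ℕ → ℤ
  | 0 => 0
  | 1 => 1
  | (n + 2) => 2 * aSeq (n + 1) - 9 * aSeq n + 2 * 3 ^ (n + 1)

theorem spread_eq_aSeq : ∀ n : ℕ, (3 : ℚ) ^ n * spread n (1/3) = (aSeq n : ℚ)
  | 0 => by simp [spread, aSeq]
  | 1 => by norm_num [spread, aSeq]
  | (n + 2) => by
    have h1 := spread_eq_aSeq (n + 1)
    have h2 := spread_eq_aSeq n
    have : spread (n+2) (1/3) =
        2 * (1 - 2 * (1/3)) * spread (n+1) (1/3) - spread n (1/3) + 2 * (1/3) := rfl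
    rw [this, aSeq]
    push_cast
    rw [← h1, ← h2]
    ring

theorem aSeq_mod3 : ∀ n : ℕ, (aSeq (n + 1) : ZMod 3) = if Even n then 1 else 2
  | 0 => by simp [aSeq]
  | (n + 1) => by
    have ih := aSeq_mod3 n
    have : (aSeq (n + 2) : ZMod 3) = 2 * (aSeq (n + 1) : ZMod 3) := by
      rw [show aSeq (n+2) = 2 * aSeq (n + 1) - 9 * aSeq n + 2 * 3 ^ (n + 1) from rfl]
      push_cast
      have h3 : (3 : ZMod 3) = 0 := by decide
      have h9 : (9 : ZMod 3) = 0 := by decide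
      rw [h3, h9, zero_pow (Nat.succ_ne_zero n)]
      ring
    rw [this, ih]
    rcases Nat.even_or_odd n with h | h
    · rw [if_pos h, if_neg (by simpa [Nat.even_add_one, Nat.not_even_iff_odd] using h)]
      decide
    · rw [if_neg (Nat.not_even_iff_odd.mpr h), if_pos (Nat.even_add_one.mpr (Nat.not_even_iff_odd.mpr h))]
      decide

theorem aSeq_mod2 : ∀ n : ℕ, (aSeq n : ZMod 2) = (n : ZMod 2)
  | 0 => by simp [aSeq]
  | 1 => by simp [aSeq]
  | (n + 2) => by
    have ih := aSeq_mod2 n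
    rw [show aSeq (n+2) = 2 * aSeq (n + 1) - 9 * aSeq n + 2 * 3 ^ (n + 1) from rfl]
    push_cast
    rw [ih]
    have h2 : (2 : ZMod 2) = 0 := by decide
    have h9 : (9 : ZMod 2) = 1 := by decide
    rw [h2, h9]
    ring_nf
    rw [CharTwo.neg_eq]

theorem spread_third_numerator (n : ℕ) (hn : 1 ≤ n) :
    ∃ z : ℤ, (3 : ℚ) ^ n * spread n (1/3) = (z : ℚ) ∧ ¬ (3 : ℤ) ∣ z ∧
      (Even n → (2 : ℤ) ∣ z) ∧ (Odd n → Odd z) := by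
  refine ⟨aSeq n, spread_eq_aSeq n, ?_, ?_, ?_⟩
  · intro hdvd
    have h0 : (aSeq n : ZMod 3) = 0 := by
      exact_mod_cast (ZMod.intCast_zmod_eq_zero_iff_dvd _ 3).mpr hdvd
    obtain ⟨m, rfl⟩ := Nat.exists_eq_add_of_le hn
    rw [show 1 + m = m + 1 by omega, aSeq_mod3 m] at h0
    rcases Nat.even_or_odd m with h | h
    · rw [if_pos h] at h0
      exact one_ne_zero h0
    · rw [if_neg (Nat.not_even_iff_odd.mpr h)] at h0
      exact absurd h0 (by decide)
  · intro he
    have h0 : (aSeq n : ZMod 2) = 0 := by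
      rw [aSeq_mod2 n]
      exact_mod_cast (ZMod.natCast_eq_zero_iff n 2).mpr he.two_dvd
    exact_mod_cast (ZMod.intCast_zmod_eq_zero_iff_dvd _ 2).mp h0
  · intro ho
    rw [← Int.not_even_iff_odd]
    intro hev
    have hdvd : (2 : ℤ) ∣ aSeq n := hev.two_dvd
    have h0 : (aSeq n : ZMod 2) = 0 := by
      exact_mod_cast (ZMod.intCast_zmod_eq_zero_iff_dvd _ 2).mpr hdvd
    rw [aSeq_mod2 n] at h0
    have h2 : (2 : ℕ) ∣ n := (ZMod.natCast_eq_zero_iff n 2).mp h0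
    exact (Nat.not_even_iff_odd.mpr ho) ((even_iff_two_dvd).mpr h2)
end

section
/- Projective triple quad formula: Let F be a field of characteristic ≠ 2 with a nondegenerate symmetric bilinear form B on F², and let U, V, W ∈ F² be vectors with B(U,U), B(V,V), B(W,W) all nonzero. Define q_w = 1 - B(U,V)²/(B(U,U)B(V,V)), q_u = 1 - B(V,W)²/(B(V,V)B(W,W)), q_v = 1 - B(U,W)²/(B(U,U)B(W,W)). Then (q_u + q_v + q_w)² = 2(q_u² + q_v² + q_w²) + 4 q_u q_v q_w. -/
private lemma tq_aux {F : Type*} [Field F] (a b c x y z : F)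
    (ha : a ≠ 0) (hb : b ≠ 0) (hc : c ≠ 0)
    (hD : a * b * c - a * x * x - z * z * c + z * x * y + y * z * x - y * b * y = 0) :
    ((1 - x ^ 2 / (b * c)) + (1 - y ^ 2 / (a * c)) + (1 - z ^ 2 / (a * b))) ^ 2 =
      2 * ((1 - x ^ 2 / (b * c)) ^ 2 + (1 - y ^ 2 / (a * c)) ^ 2 + (1 - z ^ 2 / (a * b)) ^ 2) +
      4 * (1 - x ^ 2 / (b * c)) * (1 - y ^ 2 / (a * c)) * (1 - z ^ 2 / (a * b)) := by
  field_simp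
  linear_combination (a * x ^ 2 + b * y ^ 2 + c * z ^ 2 + 2 * x * y * z - a * b * c) * hD

theorem projective_triple_quad_formula {F : Type*} [Field F]
    (hchar : (2 : F) ≠ 0)
    (B : LinearMap.BilinForm F (Fin 2 → F))
    (hsymm : ∀ x y, B x y = B y x) (hnd : B.Nondegenerate)
    (U V W : Fin 2 → F)
    (hU : B U U ≠ 0) (hV : B V V ≠ 0) (hW : B W W ≠ 0) :
    let qw := 1 - (B U V) ^ 2 / (B U U * B V V)
    let qu := 1 - (B V W) ^ 2 / (B V V * B W W)
    let qv := 1 - (B U W) ^ 2 / (B U U * B W W)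
    (qu + qv + qw) ^ 2 = 2 * (qu ^ 2 + qv ^ 2 + qw ^ 2) + 4 * qu * qv * qw := by
  intro qw qu qv
  set v : Fin 3 → (Fin 2 → F) := ![U, V, W] with hv
  have hdep : ¬ LinearIndependent F v := by
    intro h
    have := h.fintype_card_le_finrank
    simp [Module.finrank_fin_fun] at this
  obtain ⟨g, hg0, i, hgi⟩ := Fintype.not_linearIndependent_iff.mp hdep
  set M : Matrix (Fin 3) (Fin 3) F := Matrix.of fun i j => B (v i) (v j) with hM
  have hmul : M.mulVec g = 0 := by
    funext k
    have h1 : M.mulVec g k = ∑ j, g j * B (v k) (v j) := by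
      simp [Matrix.mulVec, dotProduct, hM, mul_comm]
    have h2 : ∑ j, g j * B (v k) (v j) = B (v k) (∑ j, g j • v j) := by
      rw [map_sum]; simp
    rw [h1, h2, hg0, map_zero]; rfl
  have hgne : g ≠ 0 := fun h => hgi (by rw [h]; rfl)
  have hdet : M.det = 0 := Matrix.exists_mulVec_eq_zero_iff.mp ⟨g, hgne, hmul⟩
  rw [Matrix.det_fin_three] at hdet
  simp only [hM, hv, Matrix.of_apply, Matrix.cons_val_zero, Matrix.cons_val_one,
    Matrix.head_cons, Matrix.cons_val_two, Matrix.tail_cons] at hdet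
  rw [hsymm V U, hsymm W U, hsymm W V] at hdet
  exact tq_aux (B U U) (B V V) (B W W) (B V W) (B U W) (B U V) hU hV hW hdet
end

section
/- For any rational number s = a/b in lowest terms and any prime p not dividing b, there exist infinitely many n such that the p-adic valuation of Sₙ(s) is positive, i.e. p divides Sₙ(s) (as a rational number with denominator prime to p). -/
/-- Abstract two-step recurrence for the spread polynomials. -/
def rec2 {α : Type*} [CommRing α] (t : α) : ℕ → α
  | 0 => 0
  | 1 => t
  | n + 2 => 2 * (1 - 2 * t) * rec2 t (n + 1) - rec2 t n + 2 * t

lemma rec2_spread (s : ℚ) : ∀ n, rec2 s n = spread n s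
  | 0 => rfl
  | 1 => rfl
  | n + 2 => by
    show 2 * (1 - 2 * s) * rec2 s (n + 1) - rec2 s n + 2 * s = _
    rw [rec2_spread s (n + 1), rec2_spread s n]
    rfl

lemma rec2_map {α β : Type*} [CommRing α] [CommRing β] (f : α →+* β) (t : α) :
    ∀ n, f (rec2 t n) = rec2 (f t) n
  | 0 => by simp [rec2]
  | 1 => by simp [rec2]
  | n + 2 => by
    simp only [rec2, map_add, map_sub, map_mul, map_one, map_ofNat,
      rec2_map f t (n + 1), rec2_map f t n]

lemma rec2_iterate {α : Type*} [CommRing α] (t : α) :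
    ∀ n, (fun v : α × α => (v.2, 2 * (1 - 2 * t) * v.2 - v.1 + 2 * t))^[n] (0, t)
      = (rec2 t n, rec2 t (n + 1))
  | 0 => by simp [rec2]
  | n + 1 => by
    rw [Function.iterate_succ_apply', rec2_iterate t n]
    show (_, _) = _
    rw [show rec2 t (n + 1 + 1) = 2 * (1 - 2 * t) * rec2 t (n + 1) - rec2 t n + 2 * t from rfl]

lemma rec2_step_bijective {α : Type*} [CommRing α] (t : α) :
    Function.Bijective (fun v : α × α => (v.2, 2 * (1 - 2 * t) * v.2 - v.1 + 2 * t)) := by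
  refine Function.bijective_iff_has_inverse.mpr
    ⟨fun v => (2 * (1 - 2 * t) * v.1 - v.2 + 2 * t, v.1), fun v => ?_, fun v => ?_⟩ <;>
    · obtain ⟨a, b⟩ := v
      simp only [Prod.mk.injEq, and_true, true_and]
      ring

/-- A rational `α` is divisible by the prime `p` when `α = p·(c/d)` with `d`
prime to `p`. For any rational `s` whose denominator is prime to `p`, the
prime `p` divides `Sₙ(s)` for infinitely many `n ≥ 1`. -/
theorem spread_divisible_infinitely_often (s : ℚ) (p : ℕ) (hp : p.Prime)
    (hden : ¬ (p : ℤ) ∣ (s.den : ℤ)) :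
    {n : ℕ | 1 ≤ n ∧ ∃ c d : ℤ, ¬ (p : ℤ) ∣ d ∧
      spread n s = (p : ℚ) * ((c : ℚ) / (d : ℚ))}.Infinite := by
  haveI : Fact p.Prime := ⟨hp⟩
  have hdenN : ¬ p ∣ s.den := by exact_mod_cast hden
  have hσ : ‖((s : ℚ) : ℚ_[p])‖ ≤ 1 := Padic.norm_rat_le_one hdenN
  set σ' : ℤ_[p] := ⟨(s : ℚ_[p]), hσ⟩ with hσ'
  set t : ZMod p := PadicInt.toZMod σ' with ht
  -- the padic value of spread n s
  have hval : ∀ n, ((spread n s : ℚ) : ℚ_[p]) = ((rec2 σ' n : ℤ_[p]) : ℚ_[p]) := by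
    intro n
    rw [← rec2_spread s n]
    exact (rec2_map (Rat.castHom ℚ_[p]) s n).trans
      (rec2_map (PadicInt.Coe.ringHom (p := p)) σ' n).symm
  have hred : ∀ n, PadicInt.toZMod (rec2 σ' n) = rec2 t n := fun n =>
    rec2_map (PadicInt.toZMod) σ' n
  -- find a period
  set F : ZMod p × ZMod p → ZMod p × ZMod p :=
    fun v => (v.2, 2 * (1 - 2 * t) * v.2 - v.1 + 2 * t) with hF
  obtain ⟨m, n, hmn, heq⟩ :
      ∃ m n : ℕ, m ≠ n ∧ F^[m] (0, t) = F^[n] (0, t) :=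
    Finite.exists_ne_map_eq_of_infinite (fun n : ℕ => F^[n] (0, t))
  wlog hlt : m < n generalizing m n
  · exact this n m hmn.symm heq.symm (by omega)
  have hFinj : Function.Injective F := (rec2_step_bijective t).injective
  have hT : F^[n - m] (0, t) = (0, t) := by
    have : F^[m] (F^[n - m] (0, t)) = F^[m] (0, t) := by
      rw [← Function.iterate_add_apply, show m + (n - m) = n by omega, heq]
    exact hFinj.iterate m this
  set T := n - m with hTdef
  have hT1 : 1 ≤ T := by omega
  have hper : ∀ k : ℕ, rec2 t ((k + 1) * T) = 0 := by
    intro k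
    have : F^[(k + 1) * T] (0, t) = (0, t) := by
      rw [mul_comm, Function.iterate_mul]
      exact Function.iterate_fixed hT (k + 1)
    have h2 := rec2_iterate t ((k + 1) * T)
    rw [this] at h2
    exact (congrArg Prod.fst h2).symm
  -- membership
  refine Set.infinite_of_injective_forall_mem
    (f := fun k : ℕ => (k + 1) * T) (fun a b hab => ?_) (fun k => ?_)
  · have hab' : (a + 1) * T = (b + 1) * T := hab
    have := Nat.eq_of_mul_eq_mul_right (by omega : 0 < T) hab'
    omega
  refine ⟨by nlinarith [hT1], ?_⟩
  -- p divides rec2 σ' ((k+1)*T) in ℤ_[p]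
  have hker : (p : ℤ_[p]) ∣ rec2 σ' ((k + 1) * T) := by
    rw [← PadicInt.norm_lt_one_iff_dvd]
    have h0 : PadicInt.toZMod (rec2 σ' ((k + 1) * T)) = 0 := by
      rw [hred]; exact hper k
    have : rec2 σ' ((k + 1) * T) ∈ RingHom.ker (PadicInt.toZMod (p := p)) := h0
    rw [PadicInt.ker_toZMod, PadicInt.maximalIdeal_eq_span_p,
      Ideal.mem_span_singleton, ← PadicInt.norm_lt_one_iff_dvd] at this
    exact this
  obtain ⟨y, hy⟩ := hker
  set q : ℚ := spread ((k + 1) * T) s with hq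
  by_cases hq0 : q = 0
  · refine ⟨0, 1, fun h => hp.one_lt.ne' ?_, by simp [hq0]⟩
    exact_mod_cast Int.eq_one_of_dvd_one (by positivity) h
  -- norm estimates
  have hnormq : ‖(q : ℚ_[p])‖ ≤ (p : ℝ)⁻¹ := by
    rw [hq, hval, hy]
    push_cast
    rw [norm_mul, Padic.norm_p]
    calc (p : ℝ)⁻¹ * ‖(y : ℚ_[p])‖ ≤ (p : ℝ)⁻¹ * 1 := by
          apply mul_le_mul_of_nonneg_left y.2
          positivity
      _ = (p : ℝ)⁻¹ := mul_one _
  have hpinv : (p : ℝ)⁻¹ < 1 := by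
    rw [inv_lt_one_iff₀]
    right
    exact_mod_cast hp.one_lt
  have hnorm1 : ‖(q : ℚ_[p])‖ ≤ 1 := hnormq.trans (le_of_lt hpinv)
  have hdenne : (q.den : ℚ_[p]) ≠ 0 := by
    exact_mod_cast Nat.cast_ne_zero.mpr q.den_nz
  have hcast : (q : ℚ_[p]) = (q.num : ℚ_[p]) / ((q.den : ℤ) : ℚ_[p]) := by
    rw [Rat.cast_def]; norm_cast
  -- p does not divide q.den
  have hdenq : ¬ (p : ℤ) ∣ (q.den : ℤ) := by
    intro hdvd
    have hdlt : ‖((q.den : ℤ) : ℚ_[p])‖ < 1 :=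
      Padic.norm_intCast_lt_one_iff.mpr hdvd
    have hdpos : 0 < ‖((q.den : ℤ) : ℚ_[p])‖ := by
      rw [norm_pos_iff]; exact_mod_cast hdenne
    have hnum : ¬ (p : ℤ) ∣ q.num := by
      intro hdvd'
      have h1 : p ∣ q.num.natAbs := Int.natCast_dvd.mp hdvd'
      have h2 : p ∣ q.den := Int.natCast_dvd_natCast.mp hdvd
      have := Nat.dvd_gcd h1 h2
      rw [Nat.Coprime.gcd_eq_one q.reduced] at this
      exact hp.one_lt.ne' (Nat.dvd_one.mp this)
    have hnum1 : ‖((q.num : ℤ) : ℚ_[p])‖ = 1 :=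
      le_antisymm (Padic.norm_int_le_one _)
        (le_of_not_gt fun h => hnum (Padic.norm_intCast_lt_one_iff.mp h))
    have : ‖(q : ℚ_[p])‖ = 1 / ‖((q.den : ℤ) : ℚ_[p])‖ := by
      rw [hcast, norm_div, hnum1]
    rw [this, div_le_one hdpos] at hnorm1
    linarith
  -- p divides q.num
  have hdnorm1 : ‖((q.den : ℤ) : ℚ_[p])‖ = 1 :=
    le_antisymm (Padic.norm_int_le_one _)
      (le_of_not_gt fun h => hdenq (Padic.norm_intCast_lt_one_iff.mp h))
  have hnumdvd : (p : ℤ) ∣ q.num := by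
    rw [← Padic.norm_intCast_lt_one_iff]
    have : ‖((q.num : ℤ) : ℚ_[p])‖ = ‖(q : ℚ_[p])‖ * ‖((q.den : ℤ) : ℚ_[p])‖ := by
      rw [hcast, norm_div]
      field_simp
    rw [this, hdnorm1, mul_one]
    exact lt_of_le_of_lt hnormq hpinv
  obtain ⟨c, hc⟩ := hnumdvd
  refine ⟨c, (q.den : ℤ), hdenq, ?_⟩
  show q = (p : ℚ) * ((c : ℚ) / ((q.den : ℤ) : ℚ))
  conv_lhs => rw [← Rat.num_div_den q]
  rw [hc]
  push_cast
  ring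
end

section
/- Spread number theorem (finite field version): Let p be an odd prime, k ∈ 𝔽ₚ nonzero, and q ∈ 𝔽ₚ. There exist a, b ∈ 𝔽ₚ with a² + kb² ≠ 0 and kb²/(a² + kb²) = q if and only if q(1-q) = k r² for some r ∈ 𝔽ₚ. -/
theorem spread_number_theorem (p : ℕ) (hp : p.Prime) (hodd : p ≠ 2)
    [Fact p.Prime] (k q : ZMod p) (hk : k ≠ 0) :
    (∃ a b : ZMod p, a ^ 2 + k * b ^ 2 ≠ 0 ∧
        k * b ^ 2 / (a ^ 2 + k * b ^ 2) = q) ↔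
      ∃ r : ZMod p, q * (1 - q) = k * r ^ 2 := by
  constructor
  · rintro ⟨a, b, hs, hq⟩
    refine ⟨a * b / (a ^ 2 + k * b ^ 2), ?_⟩
    subst hq
    field_simp
    ring
  · rintro ⟨r, hr⟩
    by_cases hq : q = 1
    · subst hq
      refine ⟨0, 1, ?_, ?_⟩ <;> simp [hk]
    · have h1q : (1 : ZMod p) - q ≠ 0 := sub_ne_zero.mpr (Ne.symm hq)
      refine ⟨1 - q, r, ?_, ?_⟩
      · have : (1 - q) ^ 2 + k * r ^ 2 = 1 - q := by rw [← hr]; ring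
        rw [this]; exact h1q
      · have : (1 - q) ^ 2 + k * r ^ 2 = 1 - q := by rw [← hr]; ring
        rw [this, ← hr]
        field_simp
end
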